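/- Let H be a complex inner product space, and let T and V be unitary operators on H with T ∘ V = ω · (V ∘ T), where ω is a complex number such that ω^m ≠ 1 for every integer m with 1 ≤ m ≤ n − 1 (for some natural number n ≥ 1). Let W be a subspace of H with V(W) ⊆ W, and suppose some nonzero ψ ∈ W satisfies Tψ = λψ for a complex number λ. Then the n vectors ψ, Vψ, V²ψ, …, V^{n−1}ψ all lie in W, are nonzero, and are pairwise orthogonal; consequently, if W is finite dimensional, dim W ≥ n. -/

import Mathlib

/-- Generalized Lieb–Schultz–Mattis degeneracy: suppose unitaries `T`, `V` satisfy
`T ∘ V = ω·(V ∘ T)` where `ω^m ≠ 1` for all `1 ≤ m ≤ n − 1`, `W` is a `V`-invariant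
subspace, and `ψ ∈ W` is a nonzero `T`-eigenvector. Then the `n` vectors
`ψ, Vψ, …, V^{n−1}ψ` lie in `W`, are nonzero and pairwise orthogonal; hence if `W` is
finite dimensional, `dim W ≥ n`. -/
theorem generalized_LSM_degeneracy
    {H : Type*} [NormedAddCommGroup H] [InnerProductSpace ℂ H]
    (T V : H ≃ₗᵢ[ℂ] H) (ω : ℂ) (n : ℕ) (hn : 1 ≤ n)
    (hω : ∀ m : ℕ, 1 ≤ m → m ≤ n - 1 → ω ^ m ≠ 1)
    (hTV : ∀ x : H, T (V x) = ω • V (T x))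
    (W : Submodule ℂ H) (hVW : ∀ x ∈ W, V x ∈ W)
    (ψ : H) (hψW : ψ ∈ W) (hψ : ψ ≠ 0) (lam : ℂ) (hTψ : T ψ = lam • ψ) :
    (∀ m : ℕ, m < n → (V ^ m) ψ ∈ W ∧ (V ^ m) ψ ≠ 0) ∧
    (∀ m k : ℕ, m < k → k < n → (inner ℂ ((V ^ m) ψ) ((V ^ k) ψ) : ℂ) = 0) ∧
    (FiniteDimensional ℂ W → n ≤ Module.finrank ℂ W) := by
  -- iterated apply
  have hpow : ∀ (m : ℕ) (x : H), (V ^ (m + 1)) x = V ((V ^ m) x) := by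
    intro m x
    rw [pow_succ']
    rfl
  -- membership
  have hmem : ∀ m : ℕ, (V ^ m) ψ ∈ W := by
    intro m
    induction m with
    | zero => simpa using hψW
    | succ m ih => rw [hpow]; exact hVW _ ih
  -- nonzero
  have hne : ∀ m : ℕ, (V ^ m) ψ ≠ 0 := by
    intro m h
    apply hψ
    have : (V ^ m) ψ = (V ^ m) 0 := by simpa using h
    exact (V ^ m).injective this
  -- eigenvector property
  have heig : ∀ m : ℕ, T ((V ^ m) ψ) = (ω ^ m * lam) • (V ^ m) ψ := by
    intro m
    induction m with
    | zero => simpa using hTψ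
    | succ m ih =>
        rw [hpow, hTV, ih, map_smul, smul_smul]
        congr 1
        ring
  -- eigenvalues have modulus one
  have hnorm : ∀ m : ℕ, ‖ω ^ m * lam‖ = 1 := by
    intro m
    have h1 : ‖T ((V ^ m) ψ)‖ = ‖(V ^ m) ψ‖ := T.norm_map _
    rw [heig m, norm_smul] at h1
    have h2 : ‖(V ^ m) ψ‖ ≠ 0 := norm_ne_zero_iff.mpr (hne m)
    exact mul_right_cancel₀ h2 (h1.trans (one_mul _).symm)
  have hω0 : ω ≠ 0 := by
    intro h
    have := hnorm 1
    simp [h] at this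
  have h0 : ‖lam‖ = 1 := by simpa using hnorm 0
  have hlam : (starRingEnd ℂ) lam * lam = 1 := by
    rw [Complex.conj_mul', h0]
    norm_num
  have hωc : (starRingEnd ℂ) ω * ω = 1 := by
    have h1 : ‖ω‖ = 1 := by
      have := hnorm 1
      rw [pow_one, norm_mul, h0, mul_one] at this
      exact this
    rw [Complex.conj_mul', h1]
    norm_num
  -- orthogonality
  have horth : ∀ m k : ℕ, m < k → k < n → (inner ℂ ((V ^ m) ψ) ((V ^ k) ψ) : ℂ) = 0 := by
    intro m k hmk hkn
    have key : (inner ℂ ((V ^ m) ψ) ((V ^ k) ψ) : ℂ)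
        = (inner ℂ (T ((V ^ m) ψ)) (T ((V ^ k) ψ)) : ℂ) := (T.inner_map_map _ _).symm
    rw [heig m, heig k, inner_smul_left, inner_smul_right] at key
    set z : ℂ := inner ℂ ((V ^ m) ψ) ((V ^ k) ψ)
    have hfac : (starRingEnd ℂ) (ω ^ m * lam) * (ω ^ k * lam) = ω ^ (k - m) := by
      have hkk : (ω : ℂ) ^ k = ω ^ (k - m) * ω ^ m := by
        rw [← pow_add]
        congr 1
        omega
      rw [map_mul, map_pow, hkk]
      calc (starRingEnd ℂ) ω ^ m * (starRingEnd ℂ) lam * (ω ^ (k - m) * ω ^ m * lam)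
          = ((starRingEnd ℂ) ω * ω) ^ m * ((starRingEnd ℂ) lam * lam) * ω ^ (k - m) := by
            ring
        _ = ω ^ (k - m) := by rw [hωc, hlam]; ring
    have hω1 : ω ^ (k - m) ≠ 1 := hω (k - m) (by omega) (by omega)
    have hz : (ω ^ (k - m) - 1) * z = 0 := by
      linear_combination -key - z * hfac
    rcases mul_eq_zero.mp hz with h | h
    · exact absurd (by linear_combination h : ω ^ (k - m) = 1) hω1
    · exact h
  refine ⟨fun m _ => ⟨hmem m, hne m⟩, horth, ?_⟩
  intro hW
  -- linear independence of the family in W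
  set f : Fin n → W := fun m => ⟨(V ^ (m : ℕ)) ψ, hmem m⟩ with hf
  have hli : LinearIndependent ℂ (fun m : Fin n => (V ^ (m : ℕ)) ψ) := by
    apply linearIndependent_of_ne_zero_of_inner_eq_zero
    · intro i; exact hne i
    · intro i j hij
      rcases lt_or_gt_of_ne (fun h : (i : ℕ) = (j : ℕ) => hij (Fin.ext h)) with h | h
      · exact horth i j h j.2
      · have := horth j i h i.2
        have h2 := inner_conj_symm (𝕜 := ℂ) ((V ^ (i : ℕ)) ψ) ((V ^ (j : ℕ)) ψ)
        rw [this] at h2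
        simpa using h2.symm
  have hliW : LinearIndependent ℂ f := by
    apply LinearIndependent.of_comp W.subtype
    exact hli
  simpa using hliW.fintype_card_le_finrank
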